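/- For A in the open unit ball of L(K,H), the operator A₀ := (I - A*A)^{-1/2} A* is a closed densely-defined operator from H to K satisfying (I + A₀*A₀)^{-1/2} A₀* = A. -/

import Mathlib

set_option maxHeartbeats 2000000
set_option synthInstance.maxHeartbeats 1000000

open ContinuousLinearMap

private lemma pmap_apply_congr {R : Type*} [Ring R] {E F : Type*} [AddCommGroup E] [Module R E]
    [AddCommGroup F] [Module R F] {f g : E →ₗ.[R] F} (h : f = g) (y : E) (hy : y ∈ f.domain) :
    f ⟨y, hy⟩ = g ⟨y, h ▸ hy⟩ := by subst h; rfl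

private lemma clm_one_comp {E F : Type*} [NormedAddCommGroup E] [NormedSpace ℂ E]
    [NormedAddCommGroup F] [NormedSpace ℂ F] (f : E →L[ℂ] F) :
    (1 : F →L[ℂ] F).comp f = f := by
  rw [ContinuousLinearMap.one_def, ContinuousLinearMap.id_comp]

private lemma clm_comp_one {E F : Type*} [NormedAddCommGroup E] [NormedSpace ℂ E]
    [NormedAddCommGroup F] [NormedSpace ℂ F] (f : E →L[ℂ] F) :
    f.comp (1 : E →L[ℂ] E) = f := by
  rw [ContinuousLinearMap.one_def, ContinuousLinearMap.comp_id]

private lemma aux_main {H K : Type*} [NormedAddCommGroup H] [InnerProductSpace ℂ H]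
    [CompleteSpace H] [NormedAddCommGroup K] [InnerProductSpace ℂ K] [CompleteSpace K]
    (A : K →L[ℂ] H) (hA : ‖A‖ < 1)
    (R : K →L[ℂ] K) (hR : R.IsPositive)
    (hRsq₁ : (R * R) * ((1 : K →L[ℂ] K) - (ContinuousLinearMap.adjoint A).comp A) = 1)
    (hRsq₂ : ((1 : K →L[ℂ] K) - (ContinuousLinearMap.adjoint A).comp A) * (R * R) = 1) :
    ∃ B₀ R₀ : H →L[ℂ] H, B₀.IsPositive ∧ R₀.IsPositive ∧ R₀ * R₀ = B₀ ∧
      (∀ x : H, B₀ (x + A (R (R (ContinuousLinearMap.adjoint A x)))) = x) ∧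
      (∀ y : H, B₀ y + A (R (R (ContinuousLinearMap.adjoint A (B₀ y)))) = y) ∧
      (∀ y : K, R₀ (A (R y)) = A y) := by
  set A' := ContinuousLinearMap.adjoint A with hA'def
  set a : K →L[ℂ] K := A'.comp A with hadef
  have haSA : IsSelfAdjoint a := by
    rw [IsSelfAdjoint, star_eq_adjoint, hadef, adjoint_comp, hA'def, adjoint_adjoint]
  have haPos : a.IsPositive := by
    refine ⟨isSelfAdjoint_iff_isSymmetric.mp haSA, fun x => ?_⟩
    have : a x = A' (A x) := rfl
    rw [reApplyInnerSelf, this, hA'def, adjoint_inner_left]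
    exact inner_self_nonneg
  have ha_nonneg : (0 : K →L[ℂ] K) ≤ a := (nonneg_iff_isPositive a).mpr haPos
  have hnorm_a : ‖a‖ < 1 := by
    have h := norm_adjoint_comp_self A
    rw [hadef, hA'def, h]
    nlinarith [norm_nonneg A]
  have hspec : ∀ x ∈ spectrum ℝ a, 0 ≤ x ∧ x ≤ 1 := by
    intro x hx
    refine ⟨spectrum_nonneg_of_nonneg ha_nonneg hx, ?_⟩
    rcases subsingleton_or_nontrivial K with hK | hK
    · haveI : Subsingleton (K →L[ℂ] K) := ⟨fun f g => by ext v; exact Subsingleton.elim _ _⟩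
      exact absurd (isUnit_of_subsingleton _) (spectrum.mem_iff.mp hx)
    · have h1 : ‖x‖ ≤ ‖a‖ := spectrum.norm_le_norm_of_mem hx
      rw [Real.norm_eq_abs] at h1
      have h2 : x ≤ |x| := le_abs_self x
      linarith
  -- the functions
  set s : ℝ → ℝ := fun x => Real.sqrt (1 - x) with hsdef
  set w : ℝ → ℝ := fun x => (1 + s x)⁻¹ with hwdef
  have hs_cont : Continuous s := by
    exact Real.continuous_sqrt.comp (continuous_const.sub continuous_id)
  have hw_cont : Continuous w := by
    refine (continuous_const.add hs_cont).inv₀ fun x => ?_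
    have : 0 ≤ s x := Real.sqrt_nonneg _
    show (1:ℝ) + s x ≠ 0
    exact ne_of_gt (by linarith)
  set S : K →L[ℂ] K := cfc s a with hSdef
  set W : K →L[ℂ] K := cfc w a with hWdef
  have hide : cfc (fun x : ℝ => x) a = a := cfc_id' ℝ a haSA
  -- key cfc identities
  have hWa : cfc (fun x : ℝ => w x * x) a = W * a := by
    rw [cfc_mul w (fun x : ℝ => x) a hw_cont.continuousOn continuousOn_id, hide, hWdef]
  have hWaW : cfc (fun x : ℝ => w x * x * w x) a = W * a * W := by
    rw [cfc_mul (fun x : ℝ => w x * x) w a (hw_cont.mul continuous_id).continuousOn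
      hw_cont.continuousOn, hWa, hWdef]
  have hfacts : ∀ x ∈ spectrum ℝ a, s x * s x = 1 - x ∧ 0 < 1 + s x := by
    intro x hx
    obtain ⟨h0, h1⟩ := hspec x hx
    refine ⟨Real.mul_self_sqrt (by linarith), ?_⟩
    have := Real.sqrt_nonneg (1 - x)
    simp only [hsdef]
    linarith
  have hN1 : W * a * W = W + W - 1 := by
    rw [← hWaW]
    have e : cfc (fun x : ℝ => w x * x * w x) a = cfc (fun x : ℝ => w x + w x - 1) a := by
      refine cfc_congr fun x hx => ?_
      obtain ⟨ht2, htpos⟩ := hfacts x hx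
      have hne : 1 + s x ≠ 0 := ne_of_gt htpos
      simp only [hwdef]
      field_simp
      nlinarith [ht2]
    rw [e, cfc_sub (fun x : ℝ => w x + w x) (fun _ : ℝ => 1) a
        ((hw_cont.add hw_cont).continuousOn) continuousOn_const,
      cfc_add w w (a := a) hw_cont.continuousOn hw_cont.continuousOn,
      cfc_const_one ℝ a haSA, hWdef]
  have hN2 : W * a = 1 - S := by
    rw [← hWa]
    have e : cfc (fun x : ℝ => w x * x) a = cfc (fun x : ℝ => 1 - s x) a := by
      refine cfc_congr fun x hx => ?_
      obtain ⟨ht2, htpos⟩ := hfacts x hx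
      have hne : 1 + s x ≠ 0 := ne_of_gt htpos
      simp only [hwdef]
      field_simp
      nlinarith [ht2]
    rw [e, cfc_sub (fun _ : ℝ => 1) s a continuousOn_const hs_cont.continuousOn,
      cfc_const_one ℝ a haSA, hSdef]
  have hN3 : S * S = 1 - a := by
    have e1 : cfc (fun x : ℝ => s x * s x) a = S * S := by
      rw [cfc_mul s s a hs_cont.continuousOn hs_cont.continuousOn, hSdef]
    have e : cfc (fun x : ℝ => s x * s x) a = cfc (fun x : ℝ => 1 - x) a := by
      refine cfc_congr fun x hx => ?_
      exact (hfacts x hx).1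
    rw [← e1, e, cfc_sub (fun _ : ℝ => 1) (fun x : ℝ => x) a continuousOn_const continuousOn_id,
      cfc_const_one ℝ a haSA, hide]
  have hS_nonneg : (0 : K →L[ℂ] K) ≤ S := by
    refine cfc_nonneg fun x hx => Real.sqrt_nonneg _
  have hW_nonneg : (0 : K →L[ℂ] K) ≤ W := by
    refine cfc_nonneg fun x hx => ?_
    have : 0 ≤ s x := Real.sqrt_nonneg _
    positivity
  have h1W_nonneg : (0 : K →L[ℂ] K) ≤ 1 - W := by
    have e : (1 : K →L[ℂ] K) - W = cfc (fun x : ℝ => 1 - w x) a := by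
      rw [cfc_sub (fun _ : ℝ => 1) w a continuousOn_const hw_cont.continuousOn,
        cfc_const_one ℝ a haSA, hWdef]
    rw [e]
    refine cfc_nonneg fun x hx => ?_
    have htnn : 0 ≤ s x := Real.sqrt_nonneg _
    have h1 : (0:ℝ) < 1 + s x := by linarith
    have h2 : w x ≤ 1 := by
      simp only [hwdef]
      rw [inv_le_one_iff₀]
      right; linarith
    linarith
  -- S * R = 1
  have hSpos : S.IsPositive := (nonneg_iff_isPositive S).mp hS_nonneg
  have hSsa : IsSelfAdjoint S := hSpos.isSelfAdjoint
  set X : K →L[ℂ] K := R * R * S with hXdef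
  have hXS : X * S = 1 := by
    rw [hXdef, mul_assoc, hN3]; exact hRsq₁
  have hSX' : S * (S * (R * R)) = 1 := by
    rw [← mul_assoc, hN3]; exact hRsq₂
  have hXeq : X = S * (R * R) := left_inv_eq_right_inv hXS hSX'
  have hSX : S * X = 1 := by rw [hXeq]; exact hSX'
  have hXsa : IsSelfAdjoint X := by
    have hst : star X = S * (R * R) := by
      rw [hXdef]; simp [star_mul, hSsa.star_eq, hR.isSelfAdjoint.star_eq, mul_assoc]
    rw [IsSelfAdjoint, hst, ← hXeq]
  have hXpos : X.IsPositive := by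
    refine ⟨isSelfAdjoint_iff_isSymmetric.mp hXsa, fun v => ?_⟩
    have hv : S (X v) = v := by
      have := congrArg (fun (T : K →L[ℂ] K) => T v) hSX
      simpa using this
    rw [reApplyInnerSelf]
    calc (0:ℝ) ≤ RCLike.re (inner ℂ (X v) (S (X v)) : ℂ) := (Complex.nonneg_iff.mp (hSpos.inner_nonneg_right (X v))).1
      _ = RCLike.re (inner ℂ (X v) v : ℂ) := by rw [hv]
  have hXX : X * X = R * R := by
    have h1 : X * X = R * R * (S * S) * (R * R) := by
      nth_rewrite 2 [hXeq]
      rw [hXdef]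
      simp only [mul_assoc]
    rw [h1, hN3, ← mul_assoc, hRsq₁, one_mul]
  have hR_nonneg : (0 : K →L[ℂ] K) ≤ R := (nonneg_iff_isPositive R).mpr hR
  have hX_nonneg : (0 : K →L[ℂ] K) ≤ X := (nonneg_iff_isPositive X).mpr hXpos
  have hRX : R = X := by
    rw [← CFC.sqrt_mul_self R hR_nonneg, ← CFC.sqrt_mul_self X hX_nonneg, hXX]
  have hSR : S * R = 1 := by rw [hRX]; exact hSX
  -- define the operators
  set B₀ : H →L[ℂ] H := 1 - A.comp A' with hB₀def
  set V : H →L[ℂ] H := A.comp (W.comp A') with hVdef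
  set R₀ : H →L[ℂ] H := 1 - V with hR₀def
  have hAA'sa : IsSelfAdjoint (A.comp A') := by
    rw [IsSelfAdjoint, star_eq_adjoint, adjoint_comp, hA'def, adjoint_adjoint]
  have hB₀pos : B₀.IsPositive := by
    refine ⟨isSelfAdjoint_iff_isSymmetric.mp ((IsSelfAdjoint.one (R := H →L[ℂ] H)).sub hAA'sa), fun x => ?_⟩
    rw [reApplyInnerSelf, hB₀def]
    simp only [sub_apply, one_apply, comp_apply, inner_sub_left, map_sub]
    have e1 : (inner ℂ (A (A' x)) x : ℂ) = inner ℂ (A' x) (A' x) := by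
      rw [hA'def, ← adjoint_inner_right]
    rw [e1, ContinuousLinearMap.one_apply, inner_self_eq_norm_sq, inner_self_eq_norm_sq]
    have hnA' : ‖A' x‖ ≤ ‖x‖ := by
      have h1 : ‖A' x‖ ≤ ‖A'‖ * ‖x‖ := le_opNorm A' x
      have h2 : ‖A'‖ = ‖A‖ := by
        rw [hA'def]
        exact (ContinuousLinearMap.adjoint : (K →L[ℂ] H) ≃ₗᵢ⋆[ℂ] (H →L[ℂ] K)).norm_map A
      nlinarith [norm_nonneg x]
    nlinarith [norm_nonneg (A' x), norm_nonneg x]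
  have hconj : (A ∘L ((1 - W) ∘L A')).IsPositive := by
    have h := ((nonneg_iff_isPositive _).mp h1W_nonneg).conj_adjoint A
    rw [hA'def]
    exact h
  have hR₀eq : R₀ = B₀ + A ∘L ((1 - W) ∘L A') := by
    rw [hR₀def, hB₀def, hVdef]
    simp only [sub_comp, clm_one_comp, comp_sub]
    abel
  have hR₀pos : R₀.IsPositive := by
    rw [hR₀eq]; exact hB₀pos.add hconj
  have hVV : V * V = V + V - A.comp A' := by
    have h1 : V * V = A.comp ((W * a * W).comp A') := by
      rw [hVdef, hadef]
      simp only [mul_def, comp_assoc]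
    rw [h1, hN1, hVdef]
    simp only [sub_comp, add_comp, clm_one_comp, comp_sub, comp_add]
  have hR₀sq : R₀ * R₀ = B₀ := by
    have : (1 - V) * (1 - V) = 1 - V - V + V * V := by noncomm_ring
    rw [hR₀def, this, hVV, hB₀def]; abel
  have hB₀inv₁ : B₀ * (1 + A.comp ((R * R).comp A')) = 1 := by
    have step1 : B₀ * (1 + A.comp ((R * R).comp A'))
        = 1 + A.comp ((((1 : K →L[ℂ] K) - a) * (R * R)).comp A') - A.comp A' := by
      rw [hB₀def, hadef]
      simp only [mul_def, sub_mul, one_mul, mul_sub, mul_one, comp_add, add_comp, comp_sub,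
        sub_comp, clm_one_comp, clm_comp_one, comp_assoc]
      abel
    rw [step1, hRsq₂, clm_one_comp]
    abel
  have hB₀inv₂ : (1 + A.comp ((R * R).comp A')) * B₀ = 1 := by
    have step1 : (1 + A.comp ((R * R).comp A')) * B₀
        = 1 + A.comp (((R * R) * ((1 : K →L[ℂ] K) - a)).comp A') - A.comp A' := by
      rw [hB₀def, hadef]
      simp only [mul_def, sub_mul, one_mul, mul_sub, mul_one, comp_add, add_comp, comp_sub,
        sub_comp, clm_one_comp, clm_comp_one, comp_assoc]
      abel
    rw [step1, hRsq₁, clm_one_comp]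
    abel
  have hhat : R₀.comp (A.comp R) = A := by
    have h2 : (1 : K →L[ℂ] K) - W * a = S := by rw [hN2]; exact sub_sub_cancel 1 S
    have h1 : R₀.comp A = A.comp S := by
      rw [hR₀def, hVdef, ← h2, hadef]
      simp only [mul_def, sub_comp, clm_one_comp, comp_sub, clm_comp_one, comp_assoc]
    calc R₀.comp (A.comp R) = (R₀.comp A).comp R := (comp_assoc _ _ _).symm
      _ = (A.comp S).comp R := by rw [h1]
      _ = A.comp (S.comp R) := comp_assoc _ _ _
      _ = A := by rw [← mul_def, hSR, one_def, comp_id]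
  refine ⟨B₀, R₀, hB₀pos, hR₀pos, hR₀sq, ?_, ?_, ?_⟩
  · intro x
    have := congrArg (fun (T : H →L[ℂ] H) => T x) hB₀inv₁
    simpa [mul_apply] using this
  · intro y
    have := congrArg (fun (T : H →L[ℂ] H) => T y) hB₀inv₂
    simpa [mul_apply] using this
  · intro y
    have := congrArg (fun (T : K →L[ℂ] H) => T y) hhat
    simpa using this

/-- Let `K` be finite dimensional, `A : K → H` bounded with `‖A‖ < 1`, and
let `R = (I - A*A)^{-1/2}` (the positive operator whose square is the inverse of
`I - A*A`).  Then `A₀ := (I - A*A)^{-1/2} A*`, viewed as a densely defined operator from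
`H` to `K` (here with domain all of `H`), is closed and densely defined, and its "hat"
`(I + A₀*A₀)^{-1/2} A₀*` equals `A`:  writing `B₀ = (I + A₀*A₀)^{-1}` and
`R₀ = (I + A₀*A₀)^{-1/2}`, one has `R₀ (A₀* y) = A y` for all `y`. -/
theorem hat_of_ball_section
    {H K : Type*} [NormedAddCommGroup H] [InnerProductSpace ℂ H] [CompleteSpace H]
    [NormedAddCommGroup K] [InnerProductSpace ℂ K] [CompleteSpace K]
    [FiniteDimensional ℂ K]
    (A : K →L[ℂ] H) (hA : ‖A‖ < 1)
    (R : K →L[ℂ] K) (hR : R.IsPositive)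
    (hRsq₁ : (R * R) * ((1 : K →L[ℂ] K) - (ContinuousLinearMap.adjoint A).comp A) = 1)
    (hRsq₂ : ((1 : K →L[ℂ] K) - (ContinuousLinearMap.adjoint A).comp A) * (R * R) = 1) :
    ∀ P : H →ₗ.[ℂ] K,
      P = (R.comp (ContinuousLinearMap.adjoint A) : H →L[ℂ] K).toLinearMap.toPMap ⊤ →
      Dense (P.domain : Set H) ∧ P.IsClosed ∧
      ∃ B₀ R₀ : H →L[ℂ] H, B₀.IsPositive ∧
        (∀ p : {p : P.domain // P p ∈ P.adjoint.domain},
          B₀ ((p.1 : H) + P.adjoint ⟨P p.1, p.2⟩) = (p.1 : H)) ∧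
        (∀ y : H, ∃ p : {p : P.domain // P p ∈ P.adjoint.domain},
          (p.1 : H) + P.adjoint ⟨P p.1, p.2⟩ = y) ∧
        R₀.IsPositive ∧ R₀ * R₀ = B₀ ∧
        P.adjoint.domain = ⊤ ∧
        (∀ y : K, ∀ hy : y ∈ P.adjoint.domain, A y = R₀ (P.adjoint ⟨y, hy⟩)) := by
  intro P hP
  subst hP
  set A' := ContinuousLinearMap.adjoint A with hA'def
  set T : H →L[ℂ] K := R.comp A' with hTdef
  set P : H →ₗ.[ℂ] K := T.toLinearMap.toPMap ⊤ with hPdef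
  have hdom : P.domain = ⊤ := rfl
  have hdense : Dense (P.domain : Set H) := by
    rw [hdom, Submodule.top_coe]; exact dense_univ
  -- adjoint
  have hadj : P.adjoint = (ContinuousLinearMap.adjoint T).toLinearMap.toPMap ⊤ := by
    exact ContinuousLinearMap.toPMap_adjoint_eq_adjoint_toPMap_of_dense T hdense
  have hadj_dom : P.adjoint.domain = ⊤ := by rw [hadj]; rfl
  have hTadj : ContinuousLinearMap.adjoint T = A.comp R := by
    rw [hTdef, ContinuousLinearMap.adjoint_comp, hA'def, ContinuousLinearMap.adjoint_adjoint,
      hR.isSelfAdjoint.adjoint_eq]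
  have happ : ∀ (y : K) (hy : y ∈ P.adjoint.domain), P.adjoint ⟨y, hy⟩ = A (R y) := by
    intro y hy
    rw [pmap_apply_congr hadj y hy]
    exact congrArg (fun (f : K →L[ℂ] H) => f y) hTadj
  have hPapp : ∀ x : P.domain, P x = R (A' (x : H)) := by
    intro x
    rfl
  obtain ⟨B₀, R₀, hB₀pos, hR₀pos, hR₀sq, haux1, haux2, haux3⟩ := aux_main A hA R hR hRsq₁ hRsq₂
  refine ⟨hdense, ?_, B₀, R₀, hB₀pos, ?_, ?_, hR₀pos, hR₀sq, hadj_dom, ?_⟩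
  · -- closed
    show _root_.IsClosed (P.graph : Set (H × K))
    have hgr : (P.graph : Set (H × K)) = {z : H × K | T z.1 = z.2} := by
      ext z
      simp only [SetLike.mem_coe, LinearPMap.mem_graph_iff, Set.mem_setOf_eq]
      constructor
      · rintro ⟨y, hy1, hy2⟩
        rw [← hy2, hPapp y, ← hy1]; rfl
      · intro h
        exact ⟨⟨z.1, trivial⟩, rfl, by rw [hPapp]; exact h⟩
    rw [hgr]
    exact isClosed_eq (T.continuous.comp continuous_fst) continuous_snd
  · intro p
    rw [happ (P p.1) p.2, hPapp p.1]
    exact haux1 (p.1 : H)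
  · intro y
    have hmem1 : (B₀ y) ∈ P.domain := trivial
    have hmem2 : P ⟨B₀ y, hmem1⟩ ∈ P.adjoint.domain := by rw [hadj_dom]; trivial
    refine ⟨⟨⟨B₀ y, hmem1⟩, hmem2⟩, ?_⟩
    show B₀ y + P.adjoint ⟨P ⟨B₀ y, hmem1⟩, hmem2⟩ = y
    rw [happ _ hmem2, hPapp]
    exact haux2 y
  · intro y hy
    rw [happ y hy]
    exact (haux3 y).symm
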